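/- Let A_out be the matrix produced by the homogeneous-restricted exhaustive left-to-right column reduction (ConMat), and let Ā be a complete (unrestricted) left-to-right column reduction of A_out. Then a column j is homogeneous in A_out if and only if it is homogeneous in Ā. -/

import Mathlib

namespace CM

variable {n : ℕ} {P : Type*} [DecidableEq P]

/-- `i` is the pivot row (lowest `1`) of column `j` in `A`. -/
def IsLow (A : Matrix (Fin n) (Fin n) (ZMod 2)) (j i : Fin n) : Prop :=
  A i j ≠ 0 ∧ ∀ k, A k j ≠ 0 → k ≤ i

instance (A : Matrix (Fin n) (Fin n) (ZMod 2)) (j i : Fin n) : Decidable (IsLow A j i) := by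
  unfold IsLow; infer_instance

/-- Column `j` is homogeneous: its pivot row lies in the same Morse set
(as measured by `morse`) as `j`. -/
def Homog (A : Matrix (Fin n) (Fin n) (ZMod 2)) (morse : Fin n → P) (j : Fin n) : Prop :=
  ∃ i, IsLow A j i ∧ morse i = morse j

instance (A : Matrix (Fin n) (Fin n) (ZMod 2)) (morse : Fin n → P) (j : Fin n) :
    Decidable (Homog A morse j) := by
  unfold Homog; infer_instance

/-- Row/column `i` is targetable: it is the pivot row of some homogeneous column. -/
def Targetable (A : Matrix (Fin n) (Fin n) (ZMod 2)) (morse : Fin n → P) (i : Fin n) : Prop :=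
  ∃ j, Homog A morse j ∧ IsLow A j i

/-- Add column `s` to column `j` (over `ℤ/2`). -/
def addCol (A : Matrix (Fin n) (Fin n) (ZMod 2)) (s j : Fin n) :
    Matrix (Fin n) (Fin n) (ZMod 2) :=
  fun i k => if k = j then A i j + A i s else A i k

/-- Homogeneous columns `s < j` with pivot `i`, candidates for addition to column `j`. -/
def candidates (A : Matrix (Fin n) (Fin n) (ZMod 2)) (morse : Fin n → P) (j i : Fin n) :
    Finset (Fin n) :=
  Finset.univ.filter fun s => s < j ∧ Homog A morse s ∧ IsLow A s i

/-- One inner step of ConMat: if `A[i,j] = 1` and some homogeneous column `s < j`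
has pivot `i`, add such a column (the leftmost one) to column `j`. -/
def stepIJ (morse : Fin n → P) (A : Matrix (Fin n) (Fin n) (ZMod 2)) (j i : Fin n) :
    Matrix (Fin n) (Fin n) (ZMod 2) :=
  if h : A i j ≠ 0 ∧ (candidates A morse j i).Nonempty then
    addCol A ((candidates A morse j i).min' h.2) j
  else A

/-- Exhaustively reduce column `j`, scanning rows from the bottom up. -/
def reduceCol (morse : Fin n → P) (A : Matrix (Fin n) (Fin n) (ZMod 2)) (j : Fin n) :
    Matrix (Fin n) (Fin n) (ZMod 2) :=
  ((List.finRange n).reverse).foldl (fun B i => stepIJ morse B j i) A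

/-- The ConMat algorithm: homogeneity-restricted exhaustive left-to-right column
reduction. -/
def conMat (morse : Fin n → P) (A : Matrix (Fin n) (Fin n) (ZMod 2)) :
    Matrix (Fin n) (Fin n) (ZMod 2) :=
  (List.finRange n).foldl (fun B j => reduceCol morse B j) A

/-- All columns `s < j` with pivot `i` (no homogeneity restriction). -/
def candidatesC (A : Matrix (Fin n) (Fin n) (ZMod 2)) (j i : Fin n) : Finset (Fin n) :=
  Finset.univ.filter fun s => s < j ∧ IsLow A s i

/-- One inner step of the complete (unrestricted) reduction. -/
def stepIJC (A : Matrix (Fin n) (Fin n) (ZMod 2)) (j i : Fin n) :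
    Matrix (Fin n) (Fin n) (ZMod 2) :=
  if h : A i j ≠ 0 ∧ (candidatesC A j i).Nonempty then
    addCol A ((candidatesC A j i).min' h.2) j
  else A

/-- Complete (unrestricted) left-to-right column reduction; afterwards every
nonzero column has a pivot distinct from those of all other columns. -/
def completeReduce (A : Matrix (Fin n) (Fin n) (ZMod 2)) :
    Matrix (Fin n) (Fin n) (ZMod 2) :=
  (List.finRange n).foldl
    (fun B j => ((List.finRange n).reverse).foldl (fun C i => stepIJC C j i) B) A

end CM

namespace CM

/-! ### Auxiliary machinery -/

section Aux

variable {n : ℕ} {P : Type*} [DecidableEq P]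

abbrev Mat (n : ℕ) := Matrix (Fin n) (Fin n) (ZMod 2)

lemma zmod2_eq_one : ∀ x : ZMod 2, x ≠ 0 → x = 1 := by decide

lemma foldl_inv {α β : Type*} {Q : β → Prop} (f : β → α → β) (l : List α) (b : β) (hb : Q b)
    (hf : ∀ b a, Q b → Q (f b a)) : Q (l.foldl f b) := by
  induction l generalizing b with
  | nil => exact hb
  | cons a t ih => exact ih _ (hf _ _ hb)

lemma mem_candidates {A : Mat n} {morse : Fin n → P} {j i s : Fin n} :
    s ∈ candidates A morse j i ↔ s < j ∧ Homog A morse s ∧ IsLow A s i := by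
  simp [candidates]

lemma mem_candidatesC {A : Mat n} {j i s : Fin n} :
    s ∈ candidatesC A j i ↔ s < j ∧ IsLow A s i := by
  simp [candidatesC]

lemma isLow_congr {M N : Mat n} {s : Fin n} (h : ∀ r, M r s = N r s) (i : Fin n) :
    IsLow M s i ↔ IsLow N s i := by
  unfold IsLow; simp only [h]

lemma homog_congr {M N : Mat n} {morse : Fin n → P} {s : Fin n} (h : ∀ r, M r s = N r s) :
    Homog M morse s ↔ Homog N morse s :=
  exists_congr fun i => and_congr (isLow_congr h i) Iff.rfl

lemma candidates_congr {M N : Mat n} {morse : Fin n → P} {j i : Fin n}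
    (h : ∀ s, s < j → ∀ r, M r s = N r s) :
    candidates M morse j i = candidates N morse j i := by
  ext s
  simp only [mem_candidates]
  constructor
  · rintro ⟨hs, hh, hl⟩
    exact ⟨hs, (homog_congr (h s hs)).mp hh, (isLow_congr (h s hs) i).mp hl⟩
  · rintro ⟨hs, hh, hl⟩
    exact ⟨hs, (homog_congr (h s hs)).mpr hh, (isLow_congr (h s hs) i).mpr hl⟩

lemma addCol_ne {A : Mat n} {s j c : Fin n} (hc : c ≠ j) (r : Fin n) :
    addCol A s j r c = A r c := by simp [addCol, hc]

lemma addCol_eq {A : Mat n} (s j r : Fin n) : addCol A s j r j = A r j + A r s := by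
  simp [addCol]

/-! ### `stepIJ` basics -/

lemma stepIJ_cases (morse : Fin n → P) (B : Mat n) (j i : Fin n) :
    stepIJ morse B j i = B ∨
      ∃ s, s ∈ candidates B morse j i ∧ B i j ≠ 0 ∧ stepIJ morse B j i = addCol B s j := by
  unfold stepIJ
  split
  · next h => exact Or.inr ⟨_, Finset.min'_mem _ _, h.1, rfl⟩
  · exact Or.inl rfl

lemma stepIJ_ne_col (morse : Fin n → P) (B : Mat n) (j i : Fin n) {c : Fin n}
    (hc : c ≠ j) (r : Fin n) : stepIJ morse B j i r c = B r c := by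
  rcases stepIJ_cases morse B j i with h | ⟨s, _, _, h⟩
  · rw [h]
  · rw [h, addCol_ne hc]

lemma stepIJ_high (morse : Fin n → P) (B : Mat n) (j i : Fin n) {r : Fin n} (hr : i < r) :
    stepIJ morse B j i r j = B r j := by
  rcases stepIJ_cases morse B j i with h | ⟨s, hs, _, h⟩
  · rw [h]
  · rw [h, addCol_eq]
    have hl : IsLow B s i := (mem_candidates.mp hs).2.2
    have hz : B r s = 0 := by
      by_contra hz
      exact absurd (hl.2 r hz) (not_le.mpr hr)
    rw [hz, add_zero]

lemma stepIJ_pivot (morse : Fin n → P) (B : Mat n) (j i : Fin n)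
    (h : stepIJ morse B j i i j ≠ 0) : candidates B morse j i = ∅ := by
  by_contra hne
  have hcn : (candidates B morse j i).Nonempty := Finset.nonempty_iff_ne_empty.mpr hne
  by_cases hB : B i j ≠ 0
  · have he : stepIJ morse B j i = addCol B ((candidates B morse j i).min' hcn) j := by
      unfold stepIJ
      rw [dif_pos ⟨hB, hcn⟩]
    rw [he, addCol_eq] at h
    have hs := Finset.min'_mem (candidates B morse j i) hcn
    have hl : IsLow B ((candidates B morse j i).min' hcn) i := (mem_candidates.mp hs).2.2
    rw [zmod2_eq_one _ hB, zmod2_eq_one _ hl.1] at h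
    exact h (by decide)
  · push_neg at hB
    have he : stepIJ morse B j i = B := by
      unfold stepIJ
      rw [dif_neg (by simp [hB])]
    rw [he] at h
    exact h hB

/-! ### `stepIJC` basics -/

lemma stepIJC_cases (B : Mat n) (j i : Fin n) :
    stepIJC B j i = B ∨
      ∃ s, s ∈ candidatesC B j i ∧ B i j ≠ 0 ∧ stepIJC B j i = addCol B s j := by
  unfold stepIJC
  split
  · next h => exact Or.inr ⟨_, Finset.min'_mem _ _, h.1, rfl⟩
  · exact Or.inl rfl

lemma stepIJC_ne_col (B : Mat n) (j i : Fin n) {c : Fin n} (hc : c ≠ j) (r : Fin n) :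
    stepIJC B j i r c = B r c := by
  rcases stepIJC_cases B j i with h | ⟨s, _, _, h⟩
  · rw [h]
  · rw [h, addCol_ne hc]

lemma stepIJC_noop_zero {B : Mat n} {j i : Fin n} (h : B i j = 0) : stepIJC B j i = B := by
  unfold stepIJC
  rw [dif_neg (by simp [h])]

lemma stepIJC_noop_empty {B : Mat n} {j i : Fin n} (h : candidatesC B j i = ∅) :
    stepIJC B j i = B := by
  unfold stepIJC
  rw [dif_neg (by simp [h])]

/-! ### Strict upper triangularity is preserved -/

def StrictUpper (M : Mat n) : Prop := ∀ i j, M i j ≠ 0 → i < j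

lemma addCol_strictUpper {M : Mat n} {s j : Fin n} (h : StrictUpper M) (hsj : s < j) :
    StrictUpper (addCol M s j) := by
  intro r c hrc
  by_cases hc : c = j
  · subst hc
    rw [addCol_eq] at hrc
    by_cases h1 : M r c ≠ 0
    · exact h _ _ h1
    · push_neg at h1
      rw [h1, zero_add] at hrc
      exact lt_trans (h _ _ hrc) hsj

  · rw [addCol_ne hc] at hrc
    exact h _ _ hrc

lemma stepIJ_strictUpper (morse : Fin n → P) {B : Mat n} (h : StrictUpper B) (j i : Fin n) :
    StrictUpper (stepIJ morse B j i) := by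
  rcases stepIJ_cases morse B j i with he | ⟨s, hs, _, he⟩ <;> rw [he]
  · exact h
  · exact addCol_strictUpper h (mem_candidates.mp hs).1

lemma stepIJC_strictUpper {B : Mat n} (h : StrictUpper B) (j i : Fin n) :
    StrictUpper (stepIJC B j i) := by
  rcases stepIJC_cases B j i with he | ⟨s, hs, _, he⟩ <;> rw [he]
  · exact h
  · exact addCol_strictUpper h (mem_candidatesC.mp hs).1

lemma conMat_strictUpper (morse : Fin n → P) {A : Mat n} (h : StrictUpper A) :
    StrictUpper (conMat morse A) := by
  unfold conMat
  refine foldl_inv _ _ _ h fun B j hB => ?_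
  unfold reduceCol
  exact foldl_inv _ _ _ hB fun C i hC => stepIJ_strictUpper morse hC j i

lemma completeReduce_strictUpper {A : Mat n} (h : StrictUpper A) :
    StrictUpper (completeReduce A) := by
  unfold completeReduce
  refine foldl_inv _ _ _ h fun B j hB => ?_
  exact foldl_inv _ _ _ hB fun C i hC => stepIJC_strictUpper hC j i

/-! ### The single-column pass of ConMat is exhaustive -/

lemma pass_lemma (morse : Fin n → P) (j : Fin n) :
    ∀ l : List (Fin n), l.Pairwise (· > ·) → ∀ B : Mat n,
      (∀ c, c ≠ j → ∀ r, l.foldl (fun B i => stepIJ morse B j i) B r c = B r c) ∧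
      (∀ r, (∀ x ∈ l, x < r) → l.foldl (fun B i => stepIJ morse B j i) B r j = B r j) ∧
      (∀ r ∈ l, l.foldl (fun B i => stepIJ morse B j i) B r j ≠ 0 →
        candidates B morse j r = ∅) := by
  intro l
  induction l with
  | nil =>
    intro _ B
    exact ⟨fun _ _ _ => rfl, fun _ _ => rfl, fun r hr => absurd hr List.not_mem_nil⟩
  | cons i t ih =>
    intro hp B
    have hpc := List.pairwise_cons.mp hp
    have hit : ∀ x ∈ t, x < i := hpc.1
    obtain ⟨ih1, ih2, ih3⟩ := ih hpc.2 (stepIJ morse B j i)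
    simp only [List.foldl_cons]
    refine ⟨?_, ?_, ?_⟩
    · intro c hc r
      rw [ih1 c hc r, stepIJ_ne_col morse B j i hc r]
    · intro r hr
      have hir : i < r := hr i (List.mem_cons_self (a := i) (l := t))
      rw [ih2 r fun x hx => hr x (List.mem_cons_of_mem _ hx), stepIJ_high morse B j i hir]
    · intro r hr hC
      rcases List.mem_cons.mp hr with rfl | hrt
      · rw [ih2 r hit] at hC
        exact stepIJ_pivot morse B j r hC
      · have h1 := ih3 r hrt hC
        exact (candidates_congr fun s hsj r' =>
          stepIJ_ne_col morse B j i (ne_of_lt hsj) r').symm.trans h1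

/-! ### ConMat output satisfies R3 -/

lemma outer_lemma (morse : Fin n → P) :
    ∀ l : List (Fin n), l.Pairwise (· < ·) → ∀ B : Mat n,
      (∀ c, c ∉ l → ∀ r, l.foldl (fun B j => reduceCol morse B j) B r c = B r c) ∧
      (∀ j ∈ l, ∀ r, l.foldl (fun B j => reduceCol morse B j) B r j ≠ 0 →
        candidates (l.foldl (fun B j => reduceCol morse B j) B) morse j r = ∅) := by
  intro l
  induction l with
  | nil =>
    intro _ B
    exact ⟨fun _ _ _ => rfl, fun j hj => absurd hj List.not_mem_nil⟩
  | cons j t ih =>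
    intro hp B
    have hpc := List.pairwise_cons.mp hp
    have hjt : ∀ x ∈ t, j < x := hpc.1
    have hrev : ((List.finRange n).reverse).Pairwise (· > ·) :=
      List.pairwise_reverse.mpr (List.pairwise_lt_finRange n)
    obtain ⟨p1, p2, p3⟩ := pass_lemma morse j ((List.finRange n).reverse) hrev B
    obtain ⟨ih1, ih2⟩ := ih hpc.2 (reduceCol morse B j)
    simp only [List.foldl_cons]
    have hjnt : j ∉ t := fun hj => absurd (hjt j hj) (lt_irrefl j)
    refine ⟨?_, ?_⟩
    · intro c hc r
      have hct : c ∉ t := fun h => hc (List.mem_cons_of_mem _ h)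
      have hcj : c ≠ j := fun h => hc (h ▸ List.mem_cons_self (a := j) (l := t))
      rw [ih1 c hct r]
      exact p1 c hcj r
    · intro j' hj' r hC
      rcases List.mem_cons.mp hj' with heq | hjt'
      · subst heq
        rw [ih1 j' hjnt r] at hC
        have h0 : candidates B morse j' r = ∅ :=
          p3 r (by simp [List.mem_reverse, List.mem_finRange]) hC
        have hcong : candidates (t.foldl (fun B j => reduceCol morse B j)
            (reduceCol morse B j')) morse j' r = candidates B morse j' r := by
          refine candidates_congr fun s hsj r' => ?_
          have hst : s ∉ t := fun h => absurd (hjt s h) (not_lt.mpr (le_of_lt hsj))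
          rw [ih1 s hst r']
          exact p1 s (ne_of_lt hsj) r'
        rw [hcong]
        exact h0
      · exact ih2 j' hjt' r hC

lemma conMat_R3 (morse : Fin n → P) (A : Mat n) :
    ∀ j r, conMat morse A r j ≠ 0 → candidates (conMat morse A) morse j r = ∅ := by
  intro j r
  exact (outer_lemma morse (List.finRange n) (List.pairwise_lt_finRange n) A).2 j
    (List.mem_finRange j) r

/-! ### Structure of the complete reduction -/

def passC (c : Fin n) (B : Mat n) : Mat n :=
  ((List.finRange n).reverse).foldl (fun C i => stepIJC C c i) B

lemma completeReduce_eq (A : Mat n) :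
    completeReduce A = (List.finRange n).foldl (fun B j => passC j B) A := rfl

lemma passC_ne_col (c : Fin n) (B : Mat n) {c' : Fin n} (hc : c' ≠ c) (r : Fin n) :
    passC c B r c' = B r c' := by
  unfold passC
  exact foldl_inv (Q := fun (C : Mat n) => ∀ r, C r c' = B r c')
    (fun C i => stepIJC C c i) ((List.finRange n).reverse) B (fun _ => rfl)
    (fun C i hC r' => by
      show stepIJC C c i r' c' = B r' c'
      rw [stepIJC_ne_col C c i hc r']; exact hC r') r

lemma cr_struct :
    ∀ l : List (Fin n), l.Pairwise (· < ·) → ∀ B : Mat n,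
      (∀ c, c ∉ l → ∀ r, l.foldl (fun B j => passC j B) B r c = B r c) ∧
      (∀ c ∈ l, ∃ M : Mat n,
        (∀ s, s < c → ∀ r, M r s = l.foldl (fun B j => passC j B) B r s) ∧
        (∀ r, M r c = B r c) ∧
        (∀ r, l.foldl (fun B j => passC j B) B r c = passC c M r c)) := by
  intro l
  induction l with
  | nil =>
    intro _ B
    exact ⟨fun _ _ _ => rfl, fun c hc => absurd hc List.not_mem_nil⟩
  | cons c t ih =>
    intro hp B
    have hpc := List.pairwise_cons.mp hp
    have hct : ∀ x ∈ t, c < x := hpc.1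
    have hcnt : c ∉ t := fun hc => absurd (hct c hc) (lt_irrefl c)
    obtain ⟨ih1, ih2⟩ := ih hpc.2 (passC c B)
    simp only [List.foldl_cons]
    refine ⟨?_, ?_⟩
    · intro c' hc' r
      have h1 : c' ∉ t := fun h => hc' (List.mem_cons_of_mem _ h)
      have h2 : c' ≠ c := fun h => hc' (h ▸ List.mem_cons_self (a := c) (l := t))
      rw [ih1 c' h1 r]
      exact passC_ne_col c B h2 r
    · intro c' hc'
      rcases List.mem_cons.mp hc' with heq | hc't
      · subst heq
        refine ⟨B, ?_, fun _ => rfl, ?_⟩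
        · intro s hsc r
          have hst : s ∉ t := fun h => absurd (hct s h) (not_lt.mpr (le_of_lt hsc))
          rw [ih1 s hst r]
          exact (passC_ne_col c' B (ne_of_lt hsc) r).symm
        · intro r
          exact ih1 c' hcnt r
      · obtain ⟨M, hM1, hM2, hM3⟩ := ih2 c' hc't
        refine ⟨M, hM1, ?_, hM3⟩
        intro r
        rw [hM2 r]
        exact passC_ne_col c B (ne_of_gt (hct c' hc't)) r

/-! ### Pass invariants for the complete reduction -/

lemma pass0 {c q : Fin n} :
    ∀ (l : List (Fin n)) (M : Mat n), (∀ r, q < r → M r c = 0) →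
      ∀ r, q < r → l.foldl (fun C i => stepIJC C c i) M r c = 0 := by
  intro l
  induction l with
  | nil => intro M h r hr; exact h r hr
  | cons i t ih =>
    intro M h
    simp only [List.foldl_cons]
    refine ih _ ?_
    intro r hr
    rcases stepIJC_cases M c i with he | ⟨s, hs, hMic, he⟩
    · rw [he]; exact h r hr
    · rw [he, addCol_eq]
      have hiq : ¬ q < i := fun hqi => hMic (h i hqi)
      have hl : IsLow M s i := (mem_candidatesC.mp hs).2
      have hMs : M r s = 0 := by
        by_contra hz
        exact absurd (hl.2 r hz) (not_le.mpr (lt_of_le_of_lt (not_lt.mp hiq) hr))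
      rw [h r hr, hMs, add_zero]

lemma pass_zero {c : Fin n} :
    ∀ (l : List (Fin n)) (M : Mat n), (∀ r, M r c = 0) →
      ∀ r, l.foldl (fun C i => stepIJC C c i) M r c = 0 := by
  intro l
  induction l with
  | nil => intro M h r; exact h r
  | cons i t ih =>
    intro M h
    simp only [List.foldl_cons, stepIJC_noop_zero (h i)]
    exact ih M h

lemma pass_keep {c q : Fin n} :
    ∀ (l : List (Fin n)) (M : Mat n),
      (∀ r, q < r → M r c = 0) →
      (∀ s, s < c → ¬ IsLow M s q) →
      ∀ r, q ≤ r → l.foldl (fun C i => stepIJC C c i) M r c = M r c := by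
  intro l
  induction l with
  | nil => intro M _ _ r _; rfl
  | cons i t ih =>
    intro M h0 hc r hr
    simp only [List.foldl_cons]
    rcases lt_trichotomy q i with hqi | rfl | hiq
    · rw [stepIJC_noop_zero (h0 i hqi)]
      exact ih M h0 hc r hr
    · have hemp : candidatesC M c q = ∅ := by
        refine Finset.eq_empty_iff_forall_notMem.mpr fun s hs => ?_
        obtain ⟨hsc, hl⟩ := mem_candidatesC.mp hs
        exact hc s hsc hl
      rw [stepIJC_noop_empty hemp]
      exact ih M h0 hc r hr
    · have hcol : ∀ r', i < r' → stepIJC M c i r' c = M r' c := by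
        intro r' hir
        rcases stepIJC_cases M c i with he | ⟨s, hs, _, he⟩
        · rw [he]
        · rw [he, addCol_eq]
          have hl : IsLow M s i := (mem_candidatesC.mp hs).2
          have hz : M r' s = 0 := by
            by_contra hz
            exact absurd (hl.2 r' hz) (not_le.mpr hir)
          rw [hz, add_zero]
      have h0' : ∀ r', q < r' → stepIJC M c i r' c = 0 := fun r' hq => by
        rw [hcol r' (lt_trans hiq hq)]; exact h0 r' hq
      have hc' : ∀ s, s < c → ¬ IsLow (stepIJC M c i) s q := by
        intro s hsc hl
        exact hc s hsc
          ((isLow_congr (fun r' => stepIJC_ne_col M c i (ne_of_lt hsc) r') q).mp hl)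
      rw [ih (stepIJC M c i) h0' hc' r hr, hcol r (lt_of_lt_of_le hiq hr)]

/-! ### Pivot preservation under complete reduction -/

/-- Backward pivot preservation: a pivot of the complete reduction lying in the
same Morse set as its column was already the pivot of that column beforehand. -/
lemma psi {m : ℕ} (morse : Fin n → Fin m) (hmono : Monotone morse) (B : Mat n)
    (hsu : StrictUpper B)
    (hR3 : ∀ j r, B r j ≠ 0 → candidates B morse j r = ∅)
    (hsuR : StrictUpper (completeReduce B)) :
    ∀ N (c : Fin n), c.val < N → ∀ p, IsLow (completeReduce B) c p → morse p = morse c →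
      IsLow B c p := by
  intro N
  induction N with
  | zero => intro c hc; omega
  | succ N ih =>
    intro c _ p hRp hmp
    obtain ⟨-, hstr⟩ := cr_struct (List.finRange n) (List.pairwise_lt_finRange n) B
    obtain ⟨M, hMlt, hMc, hMpass⟩ := hstr c (List.mem_finRange c)
    rw [completeReduce_eq] at hRp
    have hBne : ∃ r, B r c ≠ 0 := by
      by_contra h
      push_neg at h
      have hz : ∀ r, M r c = 0 := fun r => by rw [hMc r]; exact h r
      have h0 : (List.finRange n).foldl (fun B j => passC j B) B p c = 0 := by
        rw [hMpass p]
        exact pass_zero ((List.finRange n).reverse) M hz p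
      exact hRp.1 h0
    obtain ⟨q, hqne, hqmax⟩ : ∃ q, B q c ≠ 0 ∧ ∀ r, B r c ≠ 0 → r ≤ q := by
      obtain ⟨r0, hr0⟩ := hBne
      have hSne : (Finset.univ.filter fun r => B r c ≠ 0).Nonempty := ⟨r0, by simp [hr0]⟩
      refine ⟨Finset.max' _ hSne, ?_, ?_⟩
      · have := Finset.max'_mem _ hSne
        simpa using this
      · intro r h
        exact Finset.le_max' _ r (by simp [h])
    have hqc : q < c := hsu q c hqne
    have h0 : ∀ r, q < r → M r c = 0 := by
      intro r hr
      rw [hMc r]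
      by_contra hz
      exact absurd (hqmax r hz) (not_le.mpr hr)
    have hCz : ∀ r, q < r → (List.finRange n).foldl (fun B j => passC j B) B r c = 0 := by
      intro r hr
      rw [hMpass r]
      exact pass0 ((List.finRange n).reverse) M h0 r hr
    have hpq : p ≤ q := by
      by_contra h
      push_neg at h
      exact hRp.1 (hCz p h)
    have hmq : morse q = morse c :=
      le_antisymm (hmono hqc.le) (by rw [← hmp]; exact hmono hpq)
    have hnc : ∀ s, s < c → ¬ IsLow M s q := by
      intro s hsc hl
      have hlC : IsLow ((List.finRange n).foldl (fun B j => passC j B) B) s q :=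
        (isLow_congr (hMlt s hsc) q).mp hl
      have hqs : q < s := hsuR q s hlC.1
      have hms : morse q = morse s :=
        le_antisymm (hmono hqs.le) (by rw [hmq]; exact hmono hsc.le)
      have hlB : IsLow B s q := ih s (by have := Fin.lt_def.mp hsc; omega) q hlC hms
      have hemp : candidates B morse c q = ∅ := hR3 c q hqne
      have hmem : s ∈ candidates B morse c q :=
        mem_candidates.mpr ⟨hsc, ⟨q, hlB, hms⟩, hlB⟩
      rw [hemp] at hmem
      exact absurd hmem (Finset.notMem_empty s)
    have hkeep : ∀ r, q ≤ r →
        (List.finRange n).foldl (fun B j => passC j B) B r c = M r c := by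
      intro r hr
      rw [hMpass r]
      exact pass_keep ((List.finRange n).reverse) M h0 hnc r hr
    have hCq : (List.finRange n).foldl (fun B j => passC j B) B q c ≠ 0 := by
      rw [hkeep q le_rfl, hMc q]; exact hqne
    have hpe : p = q := le_antisymm hpq (hRp.2 q hCq)
    exact ⟨by rw [hpe]; exact hqne, fun k hk => by rw [hpe]; exact hqmax k hk⟩

/-- Forward pivot preservation: the pivot of a homogeneous column of `B` is
untouched by the complete reduction. -/
lemma fwd {m : ℕ} (morse : Fin n → Fin m) (hmono : Monotone morse) (B : Mat n)
    (hsu : StrictUpper B)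
    (hR3 : ∀ j r, B r j ≠ 0 → candidates B morse j r = ∅)
    (hsuR : StrictUpper (completeReduce B))
    (c p : Fin n) (hBp : IsLow B c p) (hmp : morse p = morse c) :
    IsLow (completeReduce B) c p := by
  obtain ⟨-, hstr⟩ := cr_struct (List.finRange n) (List.pairwise_lt_finRange n) B
  obtain ⟨M, hMlt, hMc, hMpass⟩ := hstr c (List.mem_finRange c)
  rw [completeReduce_eq]
  have h0 : ∀ r, p < r → M r c = 0 := by
    intro r hr
    rw [hMc r]
    by_contra hz
    exact absurd (hBp.2 r hz) (not_le.mpr hr)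
  have hnc : ∀ s, s < c → ¬ IsLow M s p := by
    intro s hsc hl
    have hlC : IsLow ((List.finRange n).foldl (fun B j => passC j B) B) s p :=
      (isLow_congr (hMlt s hsc) p).mp hl
    have hps : p < s := hsuR p s hlC.1
    have hms : morse p = morse s :=
      le_antisymm (hmono hps.le) (by rw [hmp]; exact hmono hsc.le)
    have hlB : IsLow B s p := psi morse hmono B hsu hR3 hsuR n s s.isLt p hlC hms
    have hemp : candidates B morse c p = ∅ := hR3 c p hBp.1
    have hmem : s ∈ candidates B morse c p :=
      mem_candidates.mpr ⟨hsc, ⟨p, hlB, hms⟩, hlB⟩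
    rw [hemp] at hmem
    exact absurd hmem (Finset.notMem_empty s)
  have hkeep : ∀ r, p ≤ r →
      (List.finRange n).foldl (fun B j => passC j B) B r c = M r c := by
    intro r hr
    rw [hMpass r]
    exact pass_keep ((List.finRange n).reverse) M h0 hnc r hr
  refine ⟨by rw [hkeep p le_rfl, hMc p]; exact hBp.1, ?_⟩
  intro k hk
  by_contra hkp
  push_neg at hkp
  have hz : (List.finRange n).foldl (fun B j => passC j B) B k c = 0 := by
    rw [hkeep k hkp.le]
    exact h0 k hkp
  exact hk hz

end Aux

/-- Let `A_out = conMat morse A` be the output of the homogeneity-restricted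
exhaustive left-to-right column reduction (ConMat) of a strictly upper triangular
boundary matrix `A` (so `A * A = 0`) whose index order is compatible with the
Morse-set blocks, and let `completeReduce A_out` be a complete (unrestricted)
left-to-right column reduction of `A_out`. Then a column `j` is homogeneous in
`A_out` if and only if it is homogeneous in the complete reduction. -/
theorem stmt_12 {n m : ℕ} (morse : Fin n → Fin m) (hmono : Monotone morse)
    (A : Matrix (Fin n) (Fin n) (ZMod 2))
    (hupper : ∀ i j, A i j ≠ 0 → i < j)
    (hboundary : A * A = 0) (j : Fin n) :
    Homog (conMat morse A) morse j ↔ Homog (completeReduce (conMat morse A)) morse j := by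
  have hsu : StrictUpper (conMat morse A) := conMat_strictUpper morse hupper
  have hR3 := conMat_R3 morse A
  have hsuR : StrictUpper (completeReduce (conMat morse A)) := completeReduce_strictUpper hsu
  constructor
  · rintro ⟨p, hl, hm⟩
    exact ⟨p, fwd morse hmono (conMat morse A) hsu hR3 hsuR j p hl hm, hm⟩
  · rintro ⟨p, hl, hm⟩
    exact ⟨p, psi morse hmono (conMat morse A) hsu hR3 hsuR n j j.isLt p hl hm, hm⟩

end CM
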